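/- Any family of data tables containing, for each n, a sub-table of the binary-string form (d = 2, with 2^n preparations realizing all n-bit strings of deterministic outcomes over n two-outcome measurements) cannot be ontologically factorized with Ω growing polynomially in n: every ontological factorization of the n-th table requires Ω ≥ 2^n. -/

import Mathlib

open Finset

/-- An ontological factorization over `Ω` ontic states of a `d = 2` data table encoded by its
first-outcome probability matrix `T ∈ [0,1]^{m×s}`. -/
def IsOF2 {m s : ℕ} (T : Matrix (Fin m) (Fin s) ℝ) (Ω : ℕ)
    (P : Matrix (Fin Ω) (Fin s) ℝ) (M : Fin m → Fin Ω → ℝ) : Prop :=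
  (∀ j k, 0 ≤ P j k) ∧ (∀ k, ∑ j, P j k = 1) ∧
  (∀ x j, 0 ≤ M x j ∧ M x j ≤ 1) ∧
  (∀ x k, ∑ j, M x j * P j k = T x k)

/-- The `n`-th binary-string table: `2^n` preparations realizing all `n`-bit strings of
deterministic outcomes over `n` two-outcome measurements. -/
noncomputable def binTable (n : ℕ) : Matrix (Fin n) (Fin (2 ^ n)) ℝ :=
  fun x k => if (k : ℕ).testBit (x : ℕ) then 1 else 0

lemma exists_poly_lt_exp (C k : ℕ) : ∃ n : ℕ, C * n ^ k < 2 ^ n := by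
  have h := tendsto_pow_const_div_const_pow_of_one_lt k (by norm_num : (1:ℝ) < 2)
  have h2 : ∀ᶠ n : ℕ in Filter.atTop, (n:ℝ) ^ k / 2 ^ n < 1 / (C + 1) := by
    have hpos : (0:ℝ) < 1 / (C + 1) := by positivity
    exact h.eventually (Filter.Tendsto.eventually_lt_const hpos Filter.tendsto_id)
  obtain ⟨n, hn⟩ := h2.exists
  refine ⟨n, ?_⟩
  have h2n : (0:ℝ) < 2 ^ n := by positivity
  have hC1 : (0:ℝ) < (C:ℝ) + 1 := by positivity
  have : ((C:ℝ) + 1) * (n:ℝ) ^ k < 2 ^ n := by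
    rw [div_lt_div_iff₀ h2n hC1] at hn
    linarith [hn]
  have hcast : (C:ℝ) * (n:ℝ) ^ k < 2 ^ n := by nlinarith [pow_nonneg (Nat.cast_nonneg n : (0:ℝ) ≤ n) k]
  have := hcast
  exact_mod_cast (by push_cast; exact hcast : ((C * n ^ k : ℕ) : ℝ) < ((2 ^ n : ℕ) : ℝ))

/-- Any family of ontological factorizations of the binary-string tables must have
`Ω n ≥ 2^n`; in particular `Ω` cannot grow polynomially in `n`. -/
theorem stmt_19 (Ωf : ℕ → ℕ)
    (hOF : ∀ n, ∃ (P : Matrix (Fin (Ωf n)) (Fin (2 ^ n)) ℝ) (M : Fin n → Fin (Ωf n) → ℝ),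
      IsOF2 (binTable n) (Ωf n) P M) :
    (∀ n, 2 ^ n ≤ Ωf n) ∧ ¬ ∃ C k : ℕ, ∀ n, Ωf n ≤ C * n ^ k := by
  have hge : ∀ n, 2 ^ n ≤ Ωf n := by
    intro n
    obtain ⟨P, M, hP0, hPsum, hM, hT⟩ := hOF n
    -- choose a support element for each column
    have hex : ∀ k : Fin (2 ^ n), ∃ j, 0 < P j k := by
      intro k
      by_contra h
      push_neg at h
      have : ∑ j, P j k = 0 := Finset.sum_eq_zero fun j _ => le_antisymm (h j) (hP0 j k)
      rw [hPsum k] at this; norm_num at this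
    choose g hg using hex
    have hinj : Function.Injective g := by
      intro k k' hkk'
      by_contra hne
      have hne' : (k : ℕ) ≠ (k' : ℕ) := fun h => hne (Fin.ext h)
      have : ∃ i, (k : ℕ).testBit i ≠ (k' : ℕ).testBit i := by
        by_contra h; push_neg at h
        exact hne' (Nat.eq_of_testBit_eq h)
      obtain ⟨i, hi⟩ := this
      have hilt : i < n := by
        by_contra hige
        push_neg at hige
        have hk : (k : ℕ) < 2 ^ i := lt_of_lt_of_le k.2 (Nat.pow_le_pow_right (by norm_num) hige)
        have hk' : (k' : ℕ) < 2 ^ i := lt_of_lt_of_le k'.2 (Nat.pow_le_pow_right (by norm_num) hige)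
        rw [Nat.testBit_lt_two_pow hk, Nat.testBit_lt_two_pow hk'] at hi
        exact hi rfl
      set x : Fin n := ⟨i, hilt⟩
      -- key facts
      have key1 : ∀ (a : Fin (2 ^ n)), (a : ℕ).testBit i = true → M x (g a) = 1 := by
        intro a ha
        have hTa : ∑ j, M x j * P j a = 1 := by
          have := hT x a
          rwa [binTable, ha, if_pos rfl] at this
        have hsum0 : ∑ j, (1 - M x j) * P j a = 0 := by
          have := hPsum a
          calc ∑ j, (1 - M x j) * P j a = (∑ j, P j a) - ∑ j, M x j * P j a := by
                rw [← Finset.sum_sub_distrib]; apply Finset.sum_congr rfl; intros; ring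
            _ = 0 := by rw [this, hTa]; ring
        have hterm : (1 - M x (g a)) * P (g a) a = 0 := by
          have := (Finset.sum_eq_zero_iff_of_nonneg (fun j _ => by
            have h1 := (hM x j).2
            have h2 := hP0 j a
            nlinarith)).mp hsum0 (g a) (Finset.mem_univ _)
          exact this
        rcases mul_eq_zero.mp hterm with h | h
        · linarith
        · exact absurd h (ne_of_gt (hg a))
      have key0 : ∀ (a : Fin (2 ^ n)), (a : ℕ).testBit i = false → M x (g a) * P (g a) a = 0 := by
        intro a ha
        have hTa : ∑ j, M x j * P j a = 0 := by
          have h := hT x a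
          simp only [binTable, x, ha, Bool.false_eq_true, if_false] at h
          exact h
        exact (Finset.sum_eq_zero_iff_of_nonneg (fun j _ => by
          have h1 := (hM x j).1
          have h2 := hP0 j a
          positivity)).mp hTa (g a) (Finset.mem_univ _)
      -- derive contradiction
      cases hbk : (k : ℕ).testBit i with
      | false =>
        have hb' : (k' : ℕ).testBit i = true := by
          revert hi; rw [hbk]; cases (k' : ℕ).testBit i <;> simp
        have h1 := key1 k' hb'
        rw [← hkk'] at h1
        have h0 := key0 k hbk
        rw [h1, one_mul] at h0
        exact absurd h0 (ne_of_gt (hg k))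
      | true =>
        have hb' : (k' : ℕ).testBit i = false := by
          revert hi; rw [hbk]; cases (k' : ℕ).testBit i <;> simp
        have h1 := key1 k hbk
        rw [hkk'] at h1
        have h0 := key0 k' hb'
        rw [h1, one_mul] at h0
        exact absurd h0 (ne_of_gt (hg k'))
    have := Fintype.card_le_of_injective g hinj
    simpa using this
  refine ⟨hge, ?_⟩
  rintro ⟨C, k, hCk⟩
  obtain ⟨n, hn⟩ := exists_poly_lt_exp C k
  exact absurd (le_trans (hge n) (hCk n)) (not_le.mpr hn)
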